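/- Let V be uniform on a finite set 𝒱 and {P_v} be distributions on a finite set X with uniform mixture U. Let M be any online algorithm on streams of length n whose internal state after each step, as a function of the current input (with all earlier inputs drawn i.i.d. from U), is a randomized map with mutual information at most I₀ with V when the input is drawn from P_V. Then dTV(M(P_V^n), M(U^n)) ≤ n·√(I₀/2). -/

import Mathlib

open Finset

def IsDist {α : Type*} [Fintype α] (p : α → ℝ) : Prop :=
  (∀ x, 0 ≤ p x) ∧ ∑ x, p x = 1

noncomputable def dTV {α : Type*} [Fintype α] (p q : α → ℝ) : ℝ :=
  (1 / 2) * ∑ x, |p x - q x|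

/-- Mutual information (in nats) of a joint distribution on a finite product. -/
noncomputable def mutualInfo {α β : Type*} [Fintype α] [Fintype β]
    (j : α × β → ℝ) : ℝ :=
  ∑ p : α × β,
    if j p = 0 then 0
    else j p * Real.log (j p / ((∑ b, j (p.1, b)) * (∑ a, j (a, p.2))))

/-- The distribution of the internal state of an online algorithm (given by the
randomized maps `M1` for the first input and `Mst i` for the `(i+1)`-st input) after
step `i`, when the inputs are drawn independently with the `j`-th input drawn from
`q j`. -/
noncomputable def stateDist {X S : Type*} [Fintype X] [Fintype S]
    (M1 : X → S → ℝ) (Mst : ℕ → S → X → S → ℝ) (q : ℕ → X → ℝ) : ℕ → S → ℝ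
  | 0 => fun s => ∑ x, q 0 x * M1 x s
  | (i + 1) => fun s =>
      ∑ s', stateDist M1 Mst q i s' * ∑ x, q (i + 1) x * Mst (i + 1) s' x s

noncomputable def Gfun (t : ℝ) : ℝ := Real.log t - 3*(t-1)*(t+5)/(2*(t+2)^2)
noncomputable def Ffun (t : ℝ) : ℝ := t * Real.log t - t + 1 - 3*(t-1)^2/(2*(t+2))

lemma hasDerivF {t : ℝ} (ht : 0 < t) : HasDerivAt Ffun (Gfun t) t := by
  have h1 : HasDerivAt (fun t : ℝ => t * Real.log t) (Real.log t + 1) t :=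
    Real.hasDerivAt_mul_log ht.ne'
  have h2 : HasDerivAt (fun t : ℝ => 3*(t-1)^2) (6*(t-1)) t := by
    have := ((hasDerivAt_id t).sub_const 1).pow 2
    have := this.const_mul 3
    refine this.congr_deriv ?_; (try simp only [id_eq]); ring
  have h3 : HasDerivAt (fun t : ℝ => 2*(t+2)) 2 t := by
    have := ((hasDerivAt_id t).add_const 2).const_mul 2
    refine this.congr_deriv ?_; (try simp only [id_eq]); ring
  have hne : 2*(t+2) ≠ 0 := by positivity
  have h4 := h2.div h3 hne
  have h5 := (h1.sub (hasDerivAt_id t)).add_const 1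
  have h6 := h5.sub h4
  refine h6.congr_deriv (Eq.symm ?_)
  unfold Gfun
  field_simp
  ring

lemma hasDerivG {t : ℝ} (ht : 0 < t) : HasDerivAt Gfun (1/t - 27/(t+2)^3) t := by
  have h1 : HasDerivAt Real.log (1/t) t := by
    simpa [one_div] using Real.hasDerivAt_log ht.ne'
  have h2 : HasDerivAt (fun t : ℝ => 3*(t-1)*(t+5)) (3*(t-1) + 3*(t+5)) t := by
    have := (((hasDerivAt_id t).sub_const 1).const_mul 3).mul ((hasDerivAt_id t).add_const 5)
    refine this.congr_deriv ?_; (try simp only [id_eq]); ring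
  have h3 : HasDerivAt (fun t : ℝ => 2*(t+2)^2) (4*(t+2)) t := by
    have := (((hasDerivAt_id t).add_const 2).pow 2).const_mul 2
    refine this.congr_deriv ?_; (try simp only [id_eq]); ring
  have hne : 2*(t+2)^2 ≠ 0 := by positivity
  have h4 := h2.div h3 hne
  have h5 := h1.sub h4
  refine h5.congr_deriv (Eq.symm ?_)
  have h2' : (t+2) ≠ 0 := by positivity
  field_simp
  ring

lemma Gnonneg_deriv {t : ℝ} (ht : 0 < t) : 0 ≤ 1/t - 27/(t+2)^3 := by
  rw [sub_nonneg, div_le_div_iff₀ (by positivity) ht]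
  nlinarith [sq_nonneg (t-1), ht.le]

lemma Fnonneg {t : ℝ} (ht : 0 < t) : 0 ≤ Ffun t := by
  have hGcont : ContinuousOn Gfun (Set.Ioi 0) := fun x hx =>
    (hasDerivG hx).continuousAt.continuousWithinAt
  have hGmono : MonotoneOn Gfun (Set.Ioi 0) := by
    apply monotoneOn_of_deriv_nonneg (convex_Ioi 0) hGcont
      (fun x hx => by rw [interior_Ioi] at hx; exact (hasDerivG hx).differentiableAt.differentiableWithinAt)
    intro x hx
    rw [interior_Ioi] at hx
    rw [(hasDerivG hx).deriv]
    exact Gnonneg_deriv hx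
  have hG1 : Gfun 1 = 0 := by unfold Gfun; norm_num
  have hFcont : ContinuousOn Ffun (Set.Ioi 0) := fun x hx =>
    (hasDerivF hx).continuousAt.continuousWithinAt
  have hF1 : Ffun 1 = 0 := by unfold Ffun; norm_num
  rcases le_or_gt 1 t with h | h
  · have hmono : MonotoneOn Ffun (Set.Ici 1) := by
      apply monotoneOn_of_deriv_nonneg (convex_Ici 1)
        (hFcont.mono (fun x hx => Set.mem_Ioi.2 (lt_of_lt_of_le one_pos (Set.mem_Ici.1 hx))))
        (fun x hx => by rw [interior_Ici] at hx; exact (hasDerivF (lt_trans one_pos hx)).differentiableAt.differentiableWithinAt)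
      intro x hx
      rw [interior_Ici] at hx
      have hx0 : (0:ℝ) < x := lt_trans one_pos hx
      rw [(hasDerivF hx0).deriv]
      rw [← hG1]
      exact hGmono (Set.mem_Ioi.2 one_pos) (Set.mem_Ioi.2 hx0) hx.le
    have := hmono (Set.mem_Ici.2 le_rfl) (Set.mem_Ici.2 h) h
    linarith [hF1 ▸ this]
  · have hanti : AntitoneOn Ffun (Set.Ioc 0 1) := by
      apply antitoneOn_of_deriv_nonpos (convex_Ioc 0 1)
        (hFcont.mono (fun x hx => hx.1))
        (fun x hx => by rw [interior_Ioc] at hx; exact (hasDerivF hx.1).differentiableAt.differentiableWithinAt)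
      intro x hx
      rw [interior_Ioc] at hx
      rw [(hasDerivF hx.1).deriv]
      rw [← hG1]
      exact hGmono (Set.mem_Ioi.2 hx.1) (Set.mem_Ioi.2 one_pos) hx.2.le
    have := hanti (Set.mem_Ioc.2 ⟨ht, h.le⟩) (Set.mem_Ioc.2 ⟨one_pos, le_rfl⟩) h.le
    linarith [hF1 ▸ this]

lemma pointwise_kl (p q : ℝ) (hp : 0 ≤ p) (hq : 0 < q) :
    3*(p-q)^2/(2*(p+2*q)) ≤ (if p = 0 then 0 else p * Real.log (p/q)) - p + q := by
  rcases eq_or_lt_of_le hp with h | h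
  · subst h
    rw [if_pos rfl, div_le_iff₀ (by positivity)]
    nlinarith
  · rw [if_neg h.ne']
    have hF := Fnonneg (t := p/q) (by positivity)
    have key : q * Ffun (p/q) = p * Real.log (p/q) - p + q - 3*(p-q)^2/(2*(p+2*q)) := by
      unfold Ffun
      have h1 : p/q + 2 ≠ 0 := by positivity
      field_simp
    nlinarith [mul_nonneg hq.le hF]

noncomputable def KL {α : Type*} [Fintype α] (p q : α → ℝ) : ℝ :=
  ∑ x, if p x = 0 then 0 else p x * Real.log (p x / q x)

theorem pinsker' {α : Type*} [Fintype α] (p q : α → ℝ) (hp : IsDist p) (hq : IsDist q)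
    (habs : ∀ x, q x = 0 → p x = 0) :
    dTV p q ≤ Real.sqrt (KL p q / 2) := by
  unfold dTV
  set T : ℝ := ∑ x, 3*(p x - q x)^2/(2*(p x + 2*q x)) with hT
  have hTKL : T ≤ KL p q := by
    have : KL p q = ∑ x, ((if p x = 0 then 0 else p x * Real.log (p x / q x)) - p x + q x) := by
      unfold KL
      rw [Finset.sum_add_distrib, Finset.sum_sub_distrib, hp.2, hq.2]
      ring
    rw [this, hT]
    apply Finset.sum_le_sum
    intro x _
    rcases eq_or_lt_of_le (hq.1 x) with h | h
    · have hpx := habs x h.symm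
      simp [← h, hpx]
    · exact pointwise_kl _ _ (hp.1 x) h
  -- Cauchy-Schwarz
  have hCS : (∑ x, |p x - q x|)^2 ≤ T * 2 := by
    set f : α → ℝ := fun x => if p x + 2*q x = 0 then 0
      else |p x - q x| / Real.sqrt (2*(p x + 2*q x)/3) with hf
    set g : α → ℝ := fun x => Real.sqrt (2*(p x + 2*q x)/3) with hg
    have hd : ∀ x, 0 ≤ p x + 2*q x := fun x => by nlinarith [hp.1 x, hq.1 x]
    have hfg : ∀ x, f x * g x = |p x - q x| := by
      intro x
      rcases eq_or_lt_of_le (hd x) with h | h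
      · have h1 : p x = 0 := by nlinarith [hp.1 x, hq.1 x]
        have h2 : q x = 0 := by nlinarith [hp.1 x, hq.1 x]
        simp [hf, hg, ← h, h1, h2]
      · have hne : Real.sqrt (2*(p x + 2*q x)/3) ≠ 0 := by
          rw [Real.sqrt_ne_zero']; linarith
        simp only [hf, hg, if_neg h.ne']
        exact div_mul_cancel₀ _ hne
    have hf2 : ∀ x, f x ^ 2 = 3*(p x - q x)^2/(2*(p x + 2*q x)) := by
      intro x
      rcases eq_or_lt_of_le (hd x) with h | h
      · have h1 : p x = 0 := by nlinarith [hp.1 x, hq.1 x]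
        have h2 : q x = 0 := by nlinarith [hp.1 x, hq.1 x]
        simp [hf, ← h, h1, h2]
      · simp only [hf, if_neg h.ne']
        rw [div_pow, sq_abs, Real.sq_sqrt (by linarith : (0:ℝ) ≤ 2*(p x + 2*q x)/3)]
        rw [div_div_eq_mul_div]
        ring_nf
    have hg2 : ∑ x, g x ^ 2 = 2 := by
      have hgx : ∀ x, g x ^ 2 = 2*(p x + 2*q x)/3 := fun x =>
        Real.sq_sqrt (by nlinarith [hp.1 x, hq.1 x])
      calc ∑ x, g x ^ 2 = ∑ x, (2/3*p x + 4/3*q x) :=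
            Finset.sum_congr rfl (fun x _ => by rw [hgx x]; ring)
        _ = 2/3*(∑ x, p x) + 4/3*(∑ x, q x) := by
            rw [Finset.sum_add_distrib, ← Finset.mul_sum, ← Finset.mul_sum]
        _ = 2 := by rw [hp.2, hq.2]; norm_num
    calc (∑ x, |p x - q x|)^2 = (∑ x, f x * g x)^2 := by
          rw [Finset.sum_congr rfl (fun x _ => (hfg x).symm)]
      _ ≤ (∑ x, f x ^ 2) * (∑ x, g x ^ 2) := Finset.sum_mul_sq_le_sq_mul_sq _ _ _
      _ = T * 2 := by
          rw [hg2, hT, Finset.sum_congr rfl (fun x _ => hf2 x)]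
  have habsnn : 0 ≤ ∑ x, |p x - q x| := Finset.sum_nonneg (fun x _ => abs_nonneg _)
  rw [show (1:ℝ)/2 * ∑ x, |p x - q x| = (∑ x, |p x - q x|)/2 by ring]
  rw [← Real.sqrt_sq (by positivity : (0:ℝ) ≤ (∑ x, |p x - q x|)/2)]
  apply Real.sqrt_le_sqrt
  rw [div_pow]
  rw [div_le_div_iff₀ (by norm_num) (by norm_num)]
  nlinarith

section Lemmas

variable {X S O : Type*} [Fintype X] [Fintype S] [Fintype O]

lemma dTV_nonneg {p q : S → ℝ} : 0 ≤ dTV p q := by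
  unfold dTV
  have : 0 ≤ ∑ x, |p x - q x| := Finset.sum_nonneg (fun x _ => abs_nonneg _)
  linarith

lemma dTV_triangle (p q r : S → ℝ) : dTV p r ≤ dTV p q + dTV q r := by
  unfold dTV
  rw [← mul_add, ← Finset.sum_add_distrib]
  have : ∀ x ∈ Finset.univ, |p x - r x| ≤ |p x - q x| + |q x - r x| :=
    fun x _ => abs_sub_le _ _ _
  have := Finset.sum_le_sum this
  linarith

/-- Data processing for total variation under a stochastic kernel. -/
lemma dTV_data_proc (p q : S → ℝ) (K : S → O → ℝ) (hK : ∀ s, IsDist (K s)) :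
    dTV (fun o => ∑ s, p s * K s o) (fun o => ∑ s, q s * K s o) ≤ dTV p q := by
  unfold dTV
  have key : ∑ o, |∑ s, p s * K s o - ∑ s, q s * K s o| ≤ ∑ s, |p s - q s| := by
    calc ∑ o, |∑ s, p s * K s o - ∑ s, q s * K s o|
        = ∑ o, |∑ s, (p s - q s) * K s o| := by
          apply Finset.sum_congr rfl; intro o _
          rw [← Finset.sum_sub_distrib]; congr 1; apply Finset.sum_congr rfl
          intro s _; ring
      _ ≤ ∑ o, ∑ s, |p s - q s| * K s o := by
          apply Finset.sum_le_sum; intro o _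
          refine (Finset.abs_sum_le_sum_abs _ _).trans ?_
          apply Finset.sum_le_sum; intro s _
          rw [abs_mul, abs_of_nonneg ((hK s).1 o)]
      _ = ∑ s, |p s - q s| * ∑ o, K s o := by
          rw [Finset.sum_comm]
          exact Finset.sum_congr rfl (fun s _ => (Finset.mul_sum _ _ _).symm)
      _ = ∑ s, |p s - q s| := by
          exact Finset.sum_congr rfl (fun s _ => by rw [(hK s).2, mul_one])
  linarith

/-- Convexity of total variation under mixtures with a common scale. -/
lemma dTV_mix {V : Type*} [Fintype V] (c : ℝ) (hc : 0 ≤ c) (p q : V → S → ℝ) :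
    dTV (fun s => c * ∑ v, p v s) (fun s => c * ∑ v, q v s) ≤
      c * ∑ v, dTV (p v) (q v) := by
  unfold dTV
  calc (1/2) * ∑ s, |c * ∑ v, p v s - c * ∑ v, q v s|
      = (1/2) * ∑ s, |∑ v, c * (p v s - q v s)| := by
        congr 1; apply Finset.sum_congr rfl; intro s _
        congr 1
        rw [← mul_sub, ← Finset.sum_sub_distrib, Finset.mul_sum]
    _ ≤ (1/2) * ∑ s, ∑ v, c * |p v s - q v s| := by
        apply mul_le_mul_of_nonneg_left _ (by norm_num)
        apply Finset.sum_le_sum; intro s _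
        refine (Finset.abs_sum_le_sum_abs _ _).trans ?_
        apply Finset.sum_le_sum; intro v _
        rw [abs_mul, abs_of_nonneg hc]
    _ = c * ∑ v, (1/2) * ∑ s, |p v s - q v s| := by
        simp only [Finset.mul_sum]
        rw [Finset.sum_comm]
        exact Finset.sum_congr rfl (fun v _ => Finset.sum_congr rfl (fun s _ => by ring))

/-- A mixture of distributions is a distribution. -/
lemma isDist_mix {w : X → ℝ} {f : X → S → ℝ} (hw : IsDist w)
    (hf : ∀ x, IsDist (f x)) : IsDist (fun s => ∑ x, w x * f x s) := by
  constructor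
  · intro s
    exact Finset.sum_nonneg (fun x _ => mul_nonneg (hw.1 x) ((hf x).1 s))
  · rw [Finset.sum_comm]
    calc ∑ x, ∑ s, w x * f x s = ∑ x, w x := by
          apply Finset.sum_congr rfl; intro x _
          rw [← Finset.mul_sum, (hf x).2, mul_one]
      _ = 1 := hw.2

lemma stateDist_congr {M1 : X → S → ℝ} {Mst : ℕ → S → X → S → ℝ}
    {q1 q2 : ℕ → X → ℝ} (i : ℕ) (h : ∀ j ≤ i, q1 j = q2 j) :
    stateDist M1 Mst q1 i = stateDist M1 Mst q2 i := by
  induction i with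
  | zero => simp only [stateDist, h 0 le_rfl]
  | succ i ih =>
    simp only [stateDist]
    rw [ih (fun j hj => h j (hj.trans (Nat.le_succ i))), h (i+1) le_rfl]

lemma isDist_stateDist {M1 : X → S → ℝ} {Mst : ℕ → S → X → S → ℝ}
    (hM1 : ∀ x, IsDist (M1 x)) (hMst : ∀ i s x, IsDist (Mst i s x))
    {q : ℕ → X → ℝ} (i : ℕ) (hq : ∀ j ≤ i, IsDist (q j)) :
    IsDist (stateDist M1 Mst q i) := by
  induction i with
  | zero => exact isDist_mix (hq 0 le_rfl) hM1
  | succ i ih =>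
    have hprev := ih (fun j hj => hq j (hj.trans (Nat.le_succ i)))
    show IsDist (fun s => ∑ s', stateDist M1 Mst q i s' *
      ∑ x, q (i+1) x * Mst (i+1) s' x s)
    exact isDist_mix hprev (fun s' => isDist_mix (hq (i+1) le_rfl) (hMst (i+1) s'))

/-- Linearity of the state distribution in the last input. -/
lemma stateDist_last [DecidableEq X] {M1 : X → S → ℝ} {Mst : ℕ → S → X → S → ℝ}
    (q : ℕ → X → ℝ) (i : ℕ) (s : S) :
    stateDist M1 Mst q i s = ∑ x, q i x *
      stateDist M1 Mst (fun j => if j = i then (fun x' => if x' = x then (1:ℝ) else 0)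
        else q j) i s := by
  cases i with
  | zero =>
    simp only [stateDist]
    apply Finset.sum_congr rfl; intro x _
    congr 1
    simp
  | succ i =>
    simp only [stateDist]
    have hcongr : ∀ x : X, stateDist M1 Mst
        (fun j => if j = i+1 then (fun x' => if x' = x then (1:ℝ) else 0) else q j) i
        = stateDist M1 Mst q i := by
      intro x
      apply stateDist_congr
      intro j hj
      rw [if_neg (by omega)]
    simp only [hcongr, ↓reduceIte, ite_mul, one_mul, zero_mul,
      Finset.sum_ite_eq', Finset.mem_univ, if_true]
    simp only [Finset.mul_sum]
    rw [Finset.sum_comm]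
    exact Finset.sum_congr rfl (fun x _ => Finset.sum_congr rfl (fun s' _ => by ring))

/-- Contraction: later identical steps cannot increase total variation. -/
lemma dTV_stateDist_contract {M1 : X → S → ℝ} {Mst : ℕ → S → X → S → ℝ}
    (hMst : ∀ i s x, IsDist (Mst i s x))
    {q1 q2 : ℕ → X → ℝ} (k i : ℕ) (hki : k ≤ i)
    (hq : ∀ j, k < j → q1 j = q2 j) (hq1 : ∀ j, IsDist (q1 j)) :
    dTV (stateDist M1 Mst q1 i) (stateDist M1 Mst q2 i) ≤
      dTV (stateDist M1 Mst q1 k) (stateDist M1 Mst q2 k) := by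
  induction i with
  | zero =>
    have : k = 0 := Nat.le_zero.mp hki
    subst this; exact le_rfl
  | succ i ih =>
    rcases Nat.lt_or_ge k (i+1) with h | h
    · have hki' : k ≤ i := Nat.lt_succ_iff.mp h
      have step : dTV (stateDist M1 Mst q1 (i+1)) (stateDist M1 Mst q2 (i+1)) ≤
          dTV (stateDist M1 Mst q1 i) (stateDist M1 Mst q2 i) := by
        have hq12 : q2 (i+1) = q1 (i+1) := (hq (i+1) (Nat.lt_succ_of_le hki')).symm
        show dTV (fun s => ∑ s', stateDist M1 Mst q1 i s' *
            ∑ x, q1 (i+1) x * Mst (i+1) s' x s)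
          (fun s => ∑ s', stateDist M1 Mst q2 i s' *
            ∑ x, q2 (i+1) x * Mst (i+1) s' x s) ≤ _
        rw [hq12]
        exact dTV_data_proc _ _ _
          (fun s' => isDist_mix (hq1 (i+1)) (hMst (i+1) s'))
      exact step.trans (ih hki')
    · have : k = i + 1 := le_antisymm hki h
      subst this; exact le_rfl

/-- Telescoping. -/
lemma dTV_telescope (H : ℕ → S → ℝ) (m : ℕ) :
    dTV (H 0) (H m) ≤ ∑ k ∈ Finset.range m, dTV (H k) (H (k+1)) := by
  induction m with
  | zero => simp [dTV]
  | succ m ih =>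
    rw [Finset.sum_range_succ]
    exact (dTV_triangle (H 0) (H m) (H (m+1))).trans (by linarith)

end Lemmas

lemma KL_nonneg {α : Type*} [Fintype α] (p q : α → ℝ) (hp : IsDist p) (hq : IsDist q)
    (habs : ∀ x, q x = 0 → p x = 0) : 0 ≤ KL p q := by
  have h1 : KL p q = ∑ x, ((if p x = 0 then 0 else p x * Real.log (p x / q x)) - p x + q x) := by
    unfold KL
    rw [Finset.sum_add_distrib, Finset.sum_sub_distrib, hp.2, hq.2]
    ring
  rw [h1]
  apply Finset.sum_nonneg
  intro x _
  rcases eq_or_lt_of_le (hq.1 x) with h | h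
  · have hpx := habs x h.symm
    simp [← h, hpx]
  · refine le_trans ?_ (pointwise_kl _ _ (hp.1 x) h)
    apply div_nonneg (by positivity)
    nlinarith [hp.1 x]

section MI

variable {S V : Type*} [Fintype S] [Fintype V] [Nonempty V]

lemma card_pos : (0:ℝ) < (Fintype.card V : ℝ) := by
  exact_mod_cast Fintype.card_pos

lemma mutualInfo_eq_avg_KL (μ : V → S → ℝ) (hμ : ∀ v, IsDist (μ v)) :
    mutualInfo (fun p : S × V => (1/(Fintype.card V : ℝ)) * μ p.2 p.1) =
      (1/(Fintype.card V : ℝ)) * ∑ v, KL (μ v)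
        (fun s => (1/(Fintype.card V : ℝ)) * ∑ w, μ w s) := by
  set N : ℝ := (Fintype.card V : ℝ) with hN
  have hNpos : (0:ℝ) < N := card_pos
  set c : ℝ := 1/N with hc
  have hcpos : (0:ℝ) < c := by positivity
  unfold mutualInfo
  rw [Fintype.sum_prod_type, Finset.sum_comm]
  rw [Finset.mul_sum]
  apply Finset.sum_congr rfl
  intro v _
  unfold KL
  rw [Finset.mul_sum]
  apply Finset.sum_congr rfl
  intro s _
  have hmarg2 : ∑ a : S, c * μ v a = c := by
    rw [← Finset.mul_sum, (hμ v).2, mul_one]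
  have hmarg1 : ∑ b : V, c * μ b s = c * ∑ w, μ w s := by
    rw [← Finset.mul_sum]
  simp only [hmarg1, hmarg2]
  have hcond : (c * μ v s = 0) ↔ (μ v s = 0) := by
    constructor
    · intro h; rcases mul_eq_zero.mp h with h | h
      · exact absurd h hcpos.ne'
      · exact h
    · intro h; rw [h, mul_zero]
  have hratio : c * μ v s / ((c * ∑ w, μ w s) * c) = μ v s / (c * ∑ w, μ w s) := by
    rw [show (c * ∑ w, μ w s) * c = c * (c * ∑ w, μ w s) by ring,
      mul_div_mul_left _ _ hcpos.ne']
  split_ifs with h1 h2 h2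
  · rw [mul_zero]
  · exact absurd (hcond.mp h1) h2
  · exact absurd (hcond.mpr h2) h1
  · rw [hratio]; ring

lemma avg_sqrt_le (k : V → ℝ) (hk : ∀ v, 0 ≤ k v) :
    (1/(Fintype.card V:ℝ)) * ∑ v, Real.sqrt (k v) ≤
      Real.sqrt ((1/(Fintype.card V:ℝ)) * ∑ v, k v) := by
  set N : ℝ := (Fintype.card V : ℝ) with hN
  have hNpos : (0:ℝ) < N := card_pos
  set c : ℝ := 1/N with hc
  have hcpos : (0:ℝ) < c := by positivity
  have hL : 0 ≤ c * ∑ v, Real.sqrt (k v) :=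
    mul_nonneg hcpos.le (Finset.sum_nonneg (fun v _ => Real.sqrt_nonneg _))
  rw [← Real.sqrt_sq hL]
  apply Real.sqrt_le_sqrt
  have hCS := Finset.sum_mul_sq_le_sq_mul_sq Finset.univ
    (fun _ : V => Real.sqrt c) (fun v => Real.sqrt c * Real.sqrt (k v))
  have h1 : ∀ v : V, Real.sqrt c * (Real.sqrt c * Real.sqrt (k v)) = c * Real.sqrt (k v) := by
    intro v
    rw [← mul_assoc, Real.mul_self_sqrt hcpos.le]
  have h2 : ∑ _v : V, Real.sqrt c ^ 2 = 1 := by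
    rw [Finset.sum_const, Real.sq_sqrt hcpos.le, Finset.card_univ, nsmul_eq_mul, hc]
    field_simp
    exact hN.symm
  have h3 : ∀ v : V, (Real.sqrt c * Real.sqrt (k v)) ^ 2 = c * k v := by
    intro v
    rw [mul_pow, Real.sq_sqrt hcpos.le, Real.sq_sqrt (hk v)]
  rw [Finset.sum_congr rfl (fun v _ => h1 v)] at hCS
  rw [h2] at hCS
  rw [Finset.sum_congr rfl (fun v _ => h3 v)] at hCS
  rw [← Finset.mul_sum, ← Finset.mul_sum] at hCS
  calc (c * ∑ v, Real.sqrt (k v))^2 ≤ 1 * (c * ∑ v, k v) := hCS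
    _ = c * ∑ v, k v := one_mul _

lemma avg_dTV_le (μ : V → S → ℝ) (hμ : ∀ v, IsDist (μ v)) (I₀ : ℝ)
    (hI : mutualInfo (fun p : S × V => (1/(Fintype.card V:ℝ)) * μ p.2 p.1) ≤ I₀) :
    (1/(Fintype.card V:ℝ)) * ∑ v, dTV (μ v)
      (fun s => (1/(Fintype.card V:ℝ)) * ∑ w, μ w s) ≤ Real.sqrt (I₀/2) := by
  rw [mutualInfo_eq_avg_KL μ hμ] at hI
  set N : ℝ := (Fintype.card V : ℝ) with hN
  have hNpos : (0:ℝ) < N := card_pos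
  set c : ℝ := 1/N with hc
  have hcpos : (0:ℝ) < c := by positivity
  set μbar : S → ℝ := fun s => c * ∑ w, μ w s with hμbar
  have hμbarDist : IsDist μbar := by
    constructor
    · intro s
      exact mul_nonneg hcpos.le (Finset.sum_nonneg (fun w _ => (hμ w).1 s))
    · simp only [hμbar, ← Finset.mul_sum]
      rw [Finset.sum_comm]
      rw [Finset.sum_congr rfl (fun w (_ : w ∈ Finset.univ) => (hμ w).2)]
      rw [Finset.sum_const, Finset.card_univ, nsmul_eq_mul, mul_one, hc]
      field_simp
      exact hN.symm
  have habs : ∀ v, ∀ s, μbar s = 0 → μ v s = 0 := by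
    intro v s h
    have h0 : ∑ w, μ w s = 0 := by
      rcases mul_eq_zero.mp h with h' | h'
      · exact absurd h' hcpos.ne'
      · exact h'
    exact (Finset.sum_eq_zero_iff_of_nonneg (fun w _ => (hμ w).1 s)).mp h0 v (Finset.mem_univ v)
  have hKLnn : ∀ v, 0 ≤ KL (μ v) μbar := fun v =>
    KL_nonneg _ _ (hμ v) hμbarDist (habs v)
  have hpins : ∀ v, dTV (μ v) μbar ≤ Real.sqrt (KL (μ v) μbar / 2) := fun v =>
    pinsker' _ _ (hμ v) hμbarDist (habs v)
  calc c * ∑ v, dTV (μ v) μbar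
      ≤ c * ∑ v, Real.sqrt (KL (μ v) μbar / 2) := by
        apply mul_le_mul_of_nonneg_left _ hcpos.le
        exact Finset.sum_le_sum (fun v _ => hpins v)
    _ ≤ Real.sqrt (c * ∑ v, (KL (μ v) μbar / 2)) :=
        avg_sqrt_le _ (fun v => div_nonneg (hKLnn v) (by norm_num))
    _ ≤ Real.sqrt (I₀/2) := by
        apply Real.sqrt_le_sqrt
        rw [← Finset.sum_div, ← mul_div_assoc]
        have h2 : c * ∑ v, KL (μ v) μbar ≤ I₀ := hI
        linarith

end MI

/-- Hybrid-argument bound: if each per-step state map (earlier inputs i.i.d. from the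
uniform mixture `U`, current input `x`) has mutual information at most `I₀` with `V`
when the current input is drawn from `P_V`, then
`dTV(M(P_V^n), M(U^n)) ≤ n·√(I₀/2)`. -/
theorem stmt_11 {X S O V : Type*} [Fintype X] [Fintype S] [Fintype O] [Fintype V]
    [Nonempty V] [DecidableEq X]
    (n : ℕ) (hn : 1 ≤ n)
    (M1 : X → S → ℝ) (hM1 : ∀ x, IsDist (M1 x))
    (Mst : ℕ → S → X → S → ℝ) (hMst : ∀ i s x, IsDist (Mst i s x))
    (Mout : S → O → ℝ) (hMout : ∀ s, IsDist (Mout s))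
    (P : V → X → ℝ) (hP : ∀ v, IsDist (P v))
    (U : X → ℝ) (hU : U = fun x => (1 / (Fintype.card V : ℝ)) * ∑ v, P v x)
    (I₀ : ℝ) (hI₀ : 0 ≤ I₀)
    (hinfo : ∀ i < n, mutualInfo (fun p : S × V =>
        (1 / (Fintype.card V : ℝ)) * ∑ x, P p.2 x *
          stateDist M1 Mst
            (fun j => if j = i then (fun x' => if x' = x then (1 : ℝ) else 0)
              else U) i p.1) ≤ I₀) :
    dTV
      (fun o => (1 / (Fintype.card V : ℝ)) * ∑ v,
        ∑ s, stateDist M1 Mst (fun _ => P v) (n - 1) s * Mout s o)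
      (fun o => ∑ s, stateDist M1 Mst (fun _ => U) (n - 1) s * Mout s o) ≤
      n * Real.sqrt (I₀ / 2) := by
  have hNpos : (0:ℝ) < (Fintype.card V : ℝ) := card_pos
  set c : ℝ := 1 / (Fintype.card V : ℝ) with hc
  have hcpos : (0:ℝ) < c := by positivity
  have hUdist : IsDist U := by
    rw [hU]; constructor
    · intro x
      exact mul_nonneg hcpos.le (Finset.sum_nonneg (fun v _ => (hP v).1 x))
    · simp only [← Finset.mul_sum]
      rw [Finset.sum_comm, Finset.sum_congr rfl (fun v (_ : v ∈ Finset.univ) => (hP v).2),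
        Finset.sum_const, Finset.card_univ, nsmul_eq_mul, mul_one, hc]
      field_simp
  have hdelta : ∀ x : X, IsDist (fun x' => if x' = x then (1:ℝ) else 0) := by
    intro x
    refine ⟨fun x' => ?_, by simp⟩
    dsimp only
    split_ifs <;> norm_num
  -- hybrid distributions
  set qh : ℕ → V → ℕ → X → ℝ := fun k v j => if j < k then U else P v with hqh
  set Hy : ℕ → O → ℝ := fun k o => c * ∑ v,
    ∑ s, stateDist M1 Mst (qh k v) (n-1) s * Mout s o with hHy
  -- endpoints
  have hH0 : Hy 0 = (fun o => c * ∑ v,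
      ∑ s, stateDist M1 Mst (fun _ => P v) (n - 1) s * Mout s o) := by
    funext o
    simp only [hHy]
    congr 1
  have hHn : Hy n = (fun o => ∑ s, stateDist M1 Mst (fun _ => U) (n - 1) s * Mout s o) := by
    funext o
    simp only [hHy, hqh]
    have hqn : ∀ v : V, stateDist M1 Mst (fun j => if j < n then U else P v) (n-1)
        = stateDist M1 Mst (fun _ => U) (n-1) := by
      intro v
      apply stateDist_congr
      intro j hj
      rw [if_pos (by omega)]
    rw [Finset.sum_congr rfl (fun v (_ : v ∈ Finset.univ) => by rw [hqn v])]
    rw [Finset.sum_const, Finset.card_univ, nsmul_eq_mul, ← mul_assoc, hc]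
    field_simp
  -- per-step bound
  have hstep : ∀ k < n, dTV (Hy k) (Hy (k+1)) ≤ Real.sqrt (I₀ / 2) := by
    intro k hk
    -- rewrite Hy as output of a kernel applied to the state mixture
    have hHout : ∀ m : ℕ, Hy m = (fun o => ∑ s,
        (fun s => c * ∑ v, stateDist M1 Mst (qh m v) (n-1) s) s * Mout s o) := by
      intro m
      funext o
      simp only [hHy, Finset.mul_sum, Finset.sum_mul]
      rw [Finset.sum_comm]
      exact Finset.sum_congr rfl (fun s _ => Finset.sum_congr rfl (fun v _ => by ring))
    have h1 : dTV (Hy k) (Hy (k+1)) ≤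
        dTV (fun s => c * ∑ v, stateDist M1 Mst (qh k v) (n-1) s)
            (fun s => c * ∑ v, stateDist M1 Mst (qh (k+1) v) (n-1) s) := by
      rw [hHout k, hHout (k+1)]
      exact dTV_data_proc _ _ _ hMout
    have h2 : dTV (fun s => c * ∑ v, stateDist M1 Mst (qh k v) (n-1) s)
            (fun s => c * ∑ v, stateDist M1 Mst (qh (k+1) v) (n-1) s) ≤
        c * ∑ v, dTV (stateDist M1 Mst (qh k v) (n-1))
          (stateDist M1 Mst (qh (k+1) v) (n-1)) :=
      dTV_mix c hcpos.le _ _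
    have h3 : ∀ v, dTV (stateDist M1 Mst (qh k v) (n-1))
          (stateDist M1 Mst (qh (k+1) v) (n-1)) ≤
        dTV (stateDist M1 Mst (qh k v) k) (stateDist M1 Mst (qh (k+1) v) k) := by
      intro v
      apply dTV_stateDist_contract hMst k (n-1) (by omega)
      · intro j hj
        simp only [hqh]
        rw [if_neg (by omega), if_neg (by omega)]
      · intro j
        simp only [hqh]
        split_ifs
        · exact hUdist
        · exact hP v
    -- identify the step-k state distributions
    set g : X → S → ℝ := fun x => stateDist M1 Mst
      (fun j => if j = k then (fun x' => if x' = x then (1:ℝ) else 0) else U) k with hg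
    set μ : V → S → ℝ := fun v s => ∑ x, P v x * g x s with hμ
    have hgd : ∀ x, IsDist (g x) := by
      intro x
      apply isDist_stateDist hM1 hMst
      intro j _
      split_ifs
      · exact hdelta x
      · exact hUdist
    have hμd : ∀ v, IsDist (μ v) := fun v => isDist_mix (hP v) hgd
    have hidk : ∀ v, stateDist M1 Mst (qh k v) k = μ v := by
      intro v
      have e1 : stateDist M1 Mst (qh k v) k =
          stateDist M1 Mst (fun j => if j = k then P v else U) k := by
        apply stateDist_congr
        intro j hj
        simp only [hqh]
        rcases eq_or_lt_of_le hj with h | h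
        · rw [if_neg (by omega), if_pos h]
        · rw [if_pos h, if_neg (by omega)]
      funext s
      rw [e1, stateDist_last (fun j => if j = k then P v else U) k s]
      simp only [if_pos rfl]
      apply Finset.sum_congr rfl
      intro x _
      congr 1
      have e2 : stateDist M1 Mst (fun j => if j = k
            then (fun x' => if x' = x then (1:ℝ) else 0)
            else (if j = k then P v else U)) k = g x := by
        refine stateDist_congr k ?_
        intro j hj
        by_cases h : j = k
        · rw [if_pos h, if_pos h]
        · rw [if_neg h, if_neg h, if_neg h]
      exact congrFun e2 s
    have hidk1 : stateDist M1 Mst (qh (k+1) (Classical.arbitrary V)) k =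
        (fun s => c * ∑ w, μ w s) := by
      have e1 : stateDist M1 Mst (qh (k+1) (Classical.arbitrary V)) k =
          stateDist M1 Mst (fun _ => U) k := by
        apply stateDist_congr
        intro j hj
        simp only [hqh]
        rw [if_pos (by omega)]
      funext s
      rw [e1, stateDist_last (fun _ => U) k s]
      have : ∀ x, stateDist M1 Mst
          (fun j => if j = k then (fun x' => if x' = x then (1:ℝ) else 0) else U) k = g x :=
        fun x => rfl
      simp only [this]
      rw [hU]
      simp only [hμ, Finset.sum_mul, Finset.mul_sum]
      rw [Finset.sum_comm]
      exact Finset.sum_congr rfl (fun v' _ => Finset.sum_congr rfl (fun x _ => by ring))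
    have hsame : ∀ v : V, stateDist M1 Mst (qh (k+1) v) k =
        stateDist M1 Mst (qh (k+1) (Classical.arbitrary V)) k := by
      intro v
      apply stateDist_congr
      intro j hj
      simp only [hqh]
      rw [if_pos (by omega), if_pos (by omega)]
    have h4 : c * ∑ v, dTV (stateDist M1 Mst (qh k v) k)
        (stateDist M1 Mst (qh (k+1) v) k) ≤ Real.sqrt (I₀ / 2) := by
      have heq : ∀ v : V, dTV (stateDist M1 Mst (qh k v) k)
          (stateDist M1 Mst (qh (k+1) v) k) =
          dTV (μ v) (fun s => c * ∑ w, μ w s) := by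
        intro v
        rw [hidk v, hsame v, hidk1]
      rw [Finset.sum_congr rfl (fun v _ => heq v)]
      exact avg_dTV_le μ hμd I₀ (hinfo k hk)
    calc dTV (Hy k) (Hy (k+1))
        ≤ _ := h1
      _ ≤ _ := h2
      _ ≤ c * ∑ v, dTV (stateDist M1 Mst (qh k v) k)
            (stateDist M1 Mst (qh (k+1) v) k) := by
          apply mul_le_mul_of_nonneg_left _ hcpos.le
          exact Finset.sum_le_sum (fun v _ => h3 v)
      _ ≤ Real.sqrt (I₀ / 2) := h4
  -- combine
  rw [← hH0, ← hHn]
  calc dTV (Hy 0) (Hy n) ≤ ∑ k ∈ Finset.range n, dTV (Hy k) (Hy (k+1)) :=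
        dTV_telescope Hy n
    _ ≤ ∑ k ∈ Finset.range n, Real.sqrt (I₀ / 2) :=
        Finset.sum_le_sum (fun k hkm => hstep k (Finset.mem_range.mp hkm))
    _ = n * Real.sqrt (I₀ / 2) := by
        rw [Finset.sum_const, Finset.card_range, nsmul_eq_mul]
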